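/- There exist real constants α₁,...,α₁₀ with α₁ ≠ 0 such that for any sequence (eⁿ) in an inner product space, ⟨(11/6)e^{n+1} - 3eⁿ + (3/2)e^{n-1} - (1/3)e^{n-2}, 2e^{n+1} - eⁿ⟩ = ‖α₁e^{n+1}‖² - ‖α₁eⁿ‖² + ‖α₂e^{n+1} + α₃eⁿ‖² - ‖α₂eⁿ + α₃e^{n-1}‖² + ‖α₄e^{n+1} + α₅eⁿ + α₆e^{n-1}‖² - ‖α₄eⁿ + α₅e^{n-1} + α₆e^{n-2}‖² + ‖α₇e^{n+1} + α₈eⁿ + α₉e^{n-1} + α₁₀e^{n-2}‖². -/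

import Mathlib

open scoped RealInnerProductSpace

private lemma key {V : Type} [NormedAddCommGroup V] [InnerProductSpace ℝ V]
    (a1 a2 a3 a4 a5 a6 a7 a8 a9 a10 : ℝ)
    (h1 : a1^2+a2^2+a4^2+a7^2 = 11/3)
    (h2 : -a1^2-a2^2+a3^2-a4^2+a5^2+a8^2 = 3)
    (h3 : -a3^2-a5^2+a6^2+a9^2 = 0)
    (h4 : -a6^2+a10^2 = 0)
    (h5 : a2*a3+a4*a5+a7*a8 = -47/12)
    (h6 : a4*a6+a7*a9 = 3/2)
    (h7 : a7*a10 = -1/3)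
    (h8 : -a2*a3-a4*a5+a5*a6+a8*a9 = -3/4)
    (h9 : -a4*a6+a8*a10 = 1/6)
    (h10 : -a5*a6+a9*a10 = 0)
    (e : ℤ → V) (n : ℤ) :
    (inner ℝ ((11/6 : ℝ) • e (n+1) - (3 : ℝ) • e n + (3/2 : ℝ) • e (n-1)
        - (1/3 : ℝ) • e (n-2)) ((2 : ℝ) • e (n+1) - e n) : ℝ)
    = ‖a1 • e (n+1)‖^2 - ‖a1 • e n‖^2
      + ‖a2 • e (n+1) + a3 • e n‖^2 - ‖a2 • e n + a3 • e (n-1)‖^2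
      + ‖a4 • e (n+1) + a5 • e n + a6 • e (n-1)‖^2
      - ‖a4 • e n + a5 • e (n-1) + a6 • e (n-2)‖^2
      + ‖a7 • e (n+1) + a8 • e n + a9 • e (n-1) + a10 • e (n-2)‖^2 := by
  simp only [← real_inner_self_eq_norm_sq]
  simp only [inner_sub_left, inner_sub_right, inner_add_left, inner_add_right,
    real_inner_smul_left, real_inner_smul_right]
  linear_combination
    (-6 - (a2*a3+a4*a5+a7*a8)) * real_inner_comm (e (n+1)) (e n)
    + (3 - (a4*a6+a7*a9)) * real_inner_comm (e (n+1)) (e (n-1))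
    + (-2/3 - (a7*a10)) * real_inner_comm (e (n+1)) (e (n-2))
    + (-3/2 + (a2*a3+a4*a5) - (a5*a6+a8*a9)) * real_inner_comm (e n) (e (n-1))
    + (1/3 + (a4*a6) - (a8*a10)) * real_inner_comm (e n) (e (n-2))
    + ((a5*a6) - (a9*a10)) * real_inner_comm (e (n-1)) (e (n-2))
    + (-⟪e (n+1), e (n+1)⟫) * h1 + (-⟪e n, e n⟫) * h2
    + (-⟪e (n-1), e (n-1)⟫) * h3 + (-⟪e (n-2), e (n-2)⟫) * h4
    + (-2*⟪e (n+1), e n⟫) * h5 + (-2*⟪e (n+1), e (n-1)⟫) * h6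
    + (-2*⟪e (n+1), e (n-2)⟫) * h7 + (-2*⟪e n, e (n-1)⟫) * h8
    + (-2*⟪e n, e (n-2)⟫) * h9 + (-2*⟪e (n-1), e (n-2)⟫) * h10

theorem stmt2 :
    ∃ a1 a2 a3 a4 a5 a6 a7 a8 a9 a10 : ℝ, a1 ≠ 0 ∧
      ∀ (V : Type) [NormedAddCommGroup V] [InnerProductSpace ℝ V]
        (e : ℤ → V) (n : ℤ),
        (inner ℝ ((11/6 : ℝ) • e (n+1) - (3 : ℝ) • e n + (3/2 : ℝ) • e (n-1)
            - (1/3 : ℝ) • e (n-2)) ((2 : ℝ) • e (n+1) - e n) : ℝ)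
        = ‖a1 • e (n+1)‖^2 - ‖a1 • e n‖^2
          + ‖a2 • e (n+1) + a3 • e n‖^2 - ‖a2 • e n + a3 • e (n-1)‖^2
          + ‖a4 • e (n+1) + a5 • e n + a6 • e (n-1)‖^2
          - ‖a4 • e n + a5 • e (n-1) + a6 • e (n-2)‖^2
          + ‖a7 • e (n+1) + a8 • e n + a9 • e (n-1) + a10 • e (n-2)‖^2 := by
  obtain ⟨u, humem, hPu⟩ : ∃ u ∈ Set.Icc (1.88:ℝ) 1.9,
      81*u^4 - 135*u^3 - 27*u^2 - 15*u + 1 = 0 := by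
    have hcont : ContinuousOn (fun x : ℝ => 81*x^4 - 135*x^3 - 27*x^2 - 15*x + 1)
        (Set.Icc (1.88:ℝ) 1.9) := by fun_prop
    have h0 : (0:ℝ) ∈ Set.Icc (81*(1.88:ℝ)^4 - 135*1.88^3 - 27*1.88^2 - 15*1.88 + 1)
        (81*(1.9:ℝ)^4 - 135*1.9^3 - 27*1.9^2 - 15*1.9 + 1) := by
      constructor <;> norm_num
    obtain ⟨x, hx, hfx⟩ := intermediate_value_Icc (by norm_num : (1.88:ℝ) ≤ 1.9) hcont h0
    exact ⟨x, hx, hfx⟩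
  obtain ⟨hu1, hu2⟩ := humem
  have upos : (0:ℝ) < u := by linarith
  have hune : u ≠ 0 := ne_of_gt upos
  obtain ⟨v, hv⟩ : ∃ v : ℝ, u * v = 1 := ⟨u⁻¹, mul_inv_cancel₀ hune⟩
  have hDpos : (0:ℝ) < 81*u^4+135*u^3-15*u-1 := by nlinarith [pow_pos upos 4, pow_pos upos 3]
  have hD : (81*u^4+135*u^3-15*u-1) ≠ 0 := ne_of_gt hDpos
  obtain ⟨w, hw⟩ : ∃ w : ℝ, (81*u^4+135*u^3-15*u-1) * w = 1 :=
    ⟨(81*u^4+135*u^3-15*u-1)⁻¹, mul_inv_cancel₀ hD⟩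
  obtain ⟨r, hr⟩ : ∃ r : ℝ, (81*u^4+135*u^3-15*u-1) * r = -(351*u^3+135*u^2-36*u-5) :=
    ⟨-(351*u^3+135*u^2-36*u-5) * w, by linear_combination (-(351*u^3+135*u^2-36*u-5)) * hw⟩
  have hE1 : 3*u*r^2 + (9*u^2+15*u-1)*r + (42*u-5) = 0 := by
    have key1 : (81*u^4+135*u^3-15*u-1)^2 * (3*u*r^2 + (9*u^2+15*u-1)*r + (42*u-5)) = 0 := by
      linear_combination (3*u*((81*u^4+135*u^3-15*u-1)*r - (351*u^3+135*u^2-36*u-5)) + (9*u^2+15*u-1)*(81*u^4+135*u^3-15*u-1)) * hr + (3*u + (-45)*u^2 + (-81)*u^3 + (-405)*u^4 + 243*u^5) * hPu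
    rcases mul_eq_zero.mp key1 with h | h
    · exact absurd h (pow_ne_zero 2 hD)
    · exact h
  obtain ⟨t, ht2⟩ : ∃ t : ℝ, t^2 = u := ⟨Real.sqrt u, Real.sq_sqrt upos.le⟩
  have hradeq : ((11:ℝ)/3 - (-(t*v)/3)^2 - (t*((47:ℝ)/12 + r*(2*r+9)/6 - (r+5)*v/9)*v)^2 - (t*(-2*r-9)*v/6)^2) = 5/144 - (3/16)*u + (9/16)*u^2 - (3/16)*u^3 := by
    linear_combination ((-2549/144)*v^2 + (-51/4)*v^2*r + (-179/36)*v^2*r^2 + (-1)*v^2*r^3 + (-1/9)*v^2*r^4 + (235/54)*v^3 + (137/54)*v^3*r + (19/27)*v^3*r^2 + (2/27)*v^3*r^3 + (-25/81)*v^4 + (-10/81)*v^4*r + (-1/81)*v^4*r^2) * ht2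
      + ((3) + (775/144)*w + (1/4)*r + (-47/48)*v + (65/36)*v*w + (-10/9)*v*r + (-1/9)*v*r^2 + (95/54)*v^2 + (59/54)*v^2*r + (1/3)*v^2*r^2 + (1/27)*v^2*r^3 + (-25/81)*v^3 + (-10/81)*v^3*r + (-1/81)*v^3*r^2 + (14)*u + (224/3)*u*w + (6)*u*r + (25/4)*u*v*w + (43/12)*u*v*r + (4/3)*u*v*r^2 + (1/3)*u*v*r^3 + (-5/9)*u*v^2*r + (-1/9)*u*v^2*r^2 + (15)*u^2*w + (3)*u^2*r + (-15)*u^2*v*w + (-1821/16)*u^3*w + (-75/4)*u^3*v*w + (981/16)*u^4*w + (-81/4)*u^5*w + (81/4)*u^6*w + (-243/16)*u^7*w) * hv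
      + ((-1/9)*v + (1/9)*v*r + (-43/108)*v^2 + (-4/27)*v^2*r + (-1/27)*v^2*r^2 + (5/81)*v^3 + (1/81)*v^3*r + (-1/3)*u*v) * hE1
      + ((1/4)*w + (-2/3)*v*w + (-5/108)*v^2*w + (6)*u*w + (3)*u^2*w) * hr
      + ((-955/144) + (-1/4)*r + (221/144)*v + (2/3)*v*r + (25/108)*v^2 + (5/108)*v^2*r + (-227/16)*u + (-6)*u*r + (9/16)*u^2 + (-3)*u^2*r + (-3/16)*u^3) * hw
      + ((1/144)*v*w + (-1/144)*u*v*w + (5/12)*u^2*v*w + (1/16)*u^3*v*w + (3/16)*u^4*v*w) * hPu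
  have hrad : (0:ℝ) < ((11:ℝ)/3 - (-(t*v)/3)^2 - (t*((47:ℝ)/12 + r*(2*r+9)/6 - (r+5)*v/9)*v)^2 - (t*(-2*r-9)*v/6)^2) := by
    rw [hradeq]; nlinarith [sq_nonneg (u - 1.88), sq_nonneg (u - 1.9)]
  have hsq : (Real.sqrt ((11:ℝ)/3 - (-(t*v)/3)^2 - (t*((47:ℝ)/12 + r*(2*r+9)/6 - (r+5)*v/9)*v)^2 - (t*(-2*r-9)*v/6)^2))^2 = ((11:ℝ)/3 - (-(t*v)/3)^2 - (t*((47:ℝ)/12 + r*(2*r+9)/6 - (r+5)*v/9)*v)^2 - (t*(-2*r-9)*v/6)^2) := Real.sq_sqrt hrad.le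
  have ha1ne : (Real.sqrt ((11:ℝ)/3 - (-(t*v)/3)^2 - (t*((47:ℝ)/12 + r*(2*r+9)/6 - (r+5)*v/9)*v)^2 - (t*(-2*r-9)*v/6)^2)) ≠ 0 := Real.sqrt_ne_zero'.mpr hrad
  have h1 : (Real.sqrt ((11:ℝ)/3 - (-(t*v)/3)^2 - (t*((47:ℝ)/12 + r*(2*r+9)/6 - (r+5)*v/9)*v)^2 - (t*(-2*r-9)*v/6)^2))^2+(t*((47:ℝ)/12 + r*(2*r+9)/6 - (r+5)*v/9)*v)^2+(t*(-2*r-9)*v/6)^2+(-(t*v)/3)^2 = 11/3 := by linear_combination hsq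
  have h2 : -(Real.sqrt ((11:ℝ)/3 - (-(t*v)/3)^2 - (t*((47:ℝ)/12 + r*(2*r+9)/6 - (r+5)*v/9)*v)^2 - (t*(-2*r-9)*v/6)^2))^2-(t*((47:ℝ)/12 + r*(2*r+9)/6 - (r+5)*v/9)*v)^2+(-t)^2-(t*(-2*r-9)*v/6)^2+(-(t*r))^2+(t*(r+5)*v/3)^2 = 3 := by
    linear_combination (-1 : ℝ) * hsq
      + ((1) + (1)*r^2 + (26/9)*v^2 + (10/9)*v^2*r + (1/9)*v^2*r^2) * ht2
      + ((5/3) + (-5)*w + (4/3)*v + (-13/9)*v*w + (5/9)*v*r + (-14)*u + (-63)*u*w + (-5)*u*r + (-1)*u*r^2 + (-5)*u*v*w + (-1/3)*u*v*r + (-3)*u^2*r + (12)*u^2*v*w + (108)*u^3*w + (15)*u^3*v*w) * hv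
      + ((1/27)*v^2 + (1/3)*u*v) * hE1
      + ((5/9)*v*w + (1/27)*v^2*w + (-5)*u*w + (-3)*u^2*w) * hr
      + ((5) + (-4/3)*v + (-5/9)*v*r + (-5/27)*v^2 + (-1/27)*v^2*r + (13)*u + (5)*u*r + (3)*u^2*r) * hw
  have h3 : -(-t)^2-(-(t*r))^2+(-t)^2+(t*r)^2 = 0 := by ring
  have h4 : -(-t)^2+t^2 = 0 := by ring
  have h5 : (t*((47:ℝ)/12 + r*(2*r+9)/6 - (r+5)*v/9)*v)*(-t)+(t*(-2*r-9)*v/6)*(-(t*r))+(-(t*v)/3)*(t*(r+5)*v/3) = -47/12 := by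
    linear_combination ((-47/12)*v) * ht2
      + ((-47/12)) * hv
  have h6 : (t*(-2*r-9)*v/6)*(-t)+(-(t*v)/3)*(t*r) = 3/2 := by
    linear_combination ((3/2)*v) * ht2
      + ((3/2)) * hv
  have h7 : (-(t*v)/3)*t = -1/3 := by
    linear_combination ((-1/3)*v) * ht2
      + ((-1/3)) * hv
  have h8 : -(t*((47:ℝ)/12 + r*(2*r+9)/6 - (r+5)*v/9)*v)*(-t)-(t*(-2*r-9)*v/6)*(-(t*r))+(-(t*r))*(-t)+(t*(r+5)*v/3)*(t*r) = -3/4 := by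
    linear_combination ((1)*r + (47/12)*v + (5/3)*v*r + (1/3)*v*r^2 + (-5/9)*v^2 + (-1/9)*v^2*r) * ht2
      + ((-3/4) + (-5/9)*v + (-1/9)*v*r + (-1)*u*r) * hv
      + ((1/9)*v) * hE1
  have h9 : -(t*(-2*r-9)*v/6)*(-t)+(t*(r+5)*v/3)*t = 1/6 := by
    linear_combination ((1/6)*v) * ht2
      + ((1/6)) * hv
  have h10 : -(-(t*r))*(-t)+(t*r)*t = 0 := by ring
  exact ⟨(Real.sqrt ((11:ℝ)/3 - (-(t*v)/3)^2 - (t*((47:ℝ)/12 + r*(2*r+9)/6 - (r+5)*v/9)*v)^2 - (t*(-2*r-9)*v/6)^2)), (t*((47:ℝ)/12 + r*(2*r+9)/6 - (r+5)*v/9)*v), (-t), (t*(-2*r-9)*v/6), (-(t*r)), (-t), (-(t*v)/3), (t*(r+5)*v/3), (t*r), t, ha1ne,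
    fun V _ _ e n => key _ _ _ _ _ _ _ _ _ _ h1 h2 h3 h4 h5 h6 h7 h8 h9 h10 e n⟩
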